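/- For the monopoly pricing problem, mixing the Vickrey auction with probability 1/3 and the zero-price lottery with probability 2/3 in a two-agent single-item setting yields expected residual surplus (1/3)(v₁ − v₂) + (2/3)((v₁+v₂)/2) = (2/3)v₁ for v₁ ≥ v₂ ≥ 0, which is at least (2/3)·max{(v₁+v₂)/2, v₁ − v₂/2}; hence this mixture is a 3/2-approximation of the benchmark on every profile. -/
import Mathlib

theorem vickrey_lottery_mixture (v₁ v₂ : ℝ) (h12 : v₂ ≤ v₁) (h2 : 0 ≤ v₂) :
    (1 / 3) * (v₁ - v₂) + (2 / 3) * ((v₁ + v₂) / 2) = (2 / 3) * v₁ ∧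
      (2 / 3) * max ((v₁ + v₂) / 2) (v₁ - v₂ / 2) ≤ (2 / 3) * v₁ ∧
      max ((v₁ + v₂) / 2) (v₁ - v₂ / 2) / (3 / 2) ≤
        (1 / 3) * (v₁ - v₂) + (2 / 3) * ((v₁ + v₂) / 2) := by
  have hmax : max ((v₁ + v₂) / 2) (v₁ - v₂ / 2) ≤ v₁ := by
    apply max_le <;> linarith
  refine ⟨by ring, by linarith, by
    rw [div_le_iff₀ (by norm_num : (0:ℝ) < 3/2)] at *
    nlinarith⟩
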